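/- arXiv:1306.1935 — 3 statements merged into one kernel-verified Lean document; each statement's English description precedes it below -/
import Mathlib

section
/- Let B⁰_λ(S) be the Brandt λ⁰-extension of a monoid S with zero, equipped with a topology making it a Hausdorff semitopological semigroup. Then for every non-zero element (α,s,β) ∈ B⁰_λ(S) there is an open neighbourhood U of (α,s,β) contained in S*_{α,β} = {(α,t,β) : t ∈ S\{0_S}}. Consequently S*_{α,β} is open and S_{α,β} = S*_{α,β} ∪ {0} is closed in B⁰_λ(S) for all α, β ∈ λ. -/
open Topology Set Filter

/-- The underlying set of the Brandt `λ⁰`-extension `B⁰_λ(S)`: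
nonzero elements are triples `(α, s, β)` with `s ≠ 0`, and `none` is the zero. -/
abbrev Brandt (S : Type*) [Zero S] (lam : Type*) : Type _ :=
  Option (lam × {s : S // s ≠ 0} × lam)

open Classical in
/-- Multiplication of the Brandt `λ⁰`-extension. -/
noncomputable def brandtMul {S : Type*} [MonoidWithZero S] {lam : Type*} :
    Brandt S lam → Brandt S lam → Brandt S lam
  | some (α, a, β), some (γ, b, δ) =>
      if h : β = γ ∧ a.1 * b.1 ≠ 0 then some (α, ⟨a.1 * b.1, h.2⟩, δ) else none
  | _, _ => none

/-- The set `S*_{α,β}` of nonzero elements of the `(α,β)` sheet. -/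
def sheet {S : Type*} [Zero S] {lam : Type*} (α β : lam) : Set (Brandt S lam) :=
  {x | ∃ s : {s : S // s ≠ 0}, x = some (α, s, β)}

/-- The sheet `S_{α,β} = S*_{α,β} ∪ {0}`. -/
def sheet0 {S : Type*} [Zero S] {lam : Type*} (α β : lam) : Set (Brandt S lam) :=
  sheet α β ∪ {none}

/-- The trace `(U)*_{α,β}` of a subset `U ⊆ S` on the `(α,β)` sheet (zero removed). -/
def sheetTrace {S : Type*} [Zero S] {lam : Type*} (α β : lam) (U : Set S) :
    Set (Brandt S lam) :=
  {x | ∃ s : {s : S // s ≠ 0}, s.1 ∈ U ∧ x = some (α, s, β)}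

/-- The basic neighbourhood `U_A(0)` of zero: all sheets outside the finite set `A`
together with the traces of `U` on the sheets from `A`. -/
def UA0 {S : Type*} [Zero S] {lam : Type*} (A : Set (lam × lam)) (U : Set S) :
    Set (Brandt S lam) :=
  {x | x = none ∨ ∃ (α β : lam) (s : {s : S // s ≠ 0}),
        x = some (α, s, β) ∧ ((α, β) ∉ A ∨ s.1 ∈ U)}

/-- The canonical topology `τ_B^S` on the Brandt `λ⁰`-extension, generated by the base
consisting of traces of open subsets of `S` on the sheets and of the sets `U_A(0)`. -/
def brandtTop (S : Type*) [Zero S] [TopologicalSpace S] (lam : Type*) :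
    TopologicalSpace (Brandt S lam) :=
  TopologicalSpace.generateFrom
    ({W | ∃ (α β : lam) (U : Set S), IsOpen U ∧ W = sheetTrace α β U} ∪
     {W | ∃ A : Set (lam × lam), A.Finite ∧
        ∃ U : Set S, IsOpen U ∧ (0 : S) ∈ U ∧ W = UA0 A U})

open Classical in
/-- The canonical copy of `S` as the sheet `S_{α,α}` inside `B⁰_λ(S)`. -/
noncomputable def brandtIncl {S : Type*} [Zero S] {lam : Type*} (α : lam) (s : S) :
    Brandt S lam :=
  if h : s = 0 then none else some (α, ⟨s, h⟩, α)

/-- Separate continuity of a multiplication. -/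
def SepCont {X : Type*} [TopologicalSpace X] (m : X → X → X) : Prop :=
  ∀ t : X, Continuous (m t) ∧ Continuous (fun x => m x t)

/-- A family of subsets is locally finite. -/
def SetLocallyFinite {X : Type*} [TopologicalSpace X] (F : Set (Set X)) : Prop :=
  ∀ x : X, ∃ U : Set X, x ∈ U ∧ IsOpen U ∧ {A ∈ F | (A ∩ U).Nonempty}.Finite

/-- `X` is pseudocompact: every locally finite family of nonempty open subsets is finite. -/
def Pseudocompact (X : Type*) [TopologicalSpace X] : Prop :=
  ∀ F : Set (Set X), (∀ U ∈ F, IsOpen U ∧ U.Nonempty) → SetLocallyFinite F → F.Finite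

/-- `X` is countably pracompact: there is a dense set `A` such that every infinite
subset of `A` has an accumulation point in `X`. -/
def CountablyPracompact (X : Type*) [TopologicalSpace X] : Prop :=
  ∃ A : Set X, Dense A ∧ ∀ B ⊆ A, B.Infinite → ∃ x : X, AccPt x (𝓟 B)

/-- `X` is countably compact: every countable open cover has a finite subcover. -/
def CountablyCompactSp (X : Type*) [TopologicalSpace X] : Prop :=
  ∀ F : Set (Set X), F.Countable → (∀ U ∈ F, IsOpen U) → ⋃₀ F = univ →
    ∃ G ⊆ F, G.Finite ∧ ⋃₀ G = univ


lemma brandtMul_none_left {S : Type*} [MonoidWithZero S] {lam : Type*}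
    (y : Brandt S lam) : brandtMul none y = none := rfl

lemma brandtMul_none_right {S : Type*} [MonoidWithZero S] {lam : Type*}
    (y : Brandt S lam) : brandtMul y none = none := by cases y <;> rfl

open Classical in
lemma brandtMul_some_some {S : Type*} [MonoidWithZero S] {lam : Type*}
    (α β γ δ : lam) (a b : {s : S // s ≠ 0}) :
    brandtMul (some (α, a, β)) (some (γ, b, δ)) =
      if h : β = γ ∧ a.1 * b.1 ≠ 0 then some (α, ⟨a.1 * b.1, h.2⟩, δ) else none := rfl

open Classical in
lemma brandtMul_id_left {S : Type*} [MonoidWithZero S] {lam : Type*}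
    (h10 : (1 : S) ≠ 0) (α γ δ : lam) (b : {s : S // s ≠ 0}) :
    brandtMul (some (α, ⟨1, h10⟩, α)) (some (γ, b, δ)) =
      if α = γ then some (α, b, δ) else none := by
  rw [brandtMul_some_some]
  by_cases h : α = γ
  · rw [dif_pos ⟨h, by simpa using b.2⟩, if_pos h]
    simp [Subtype.ext_iff]
  · rw [dif_neg (by tauto), if_neg h]

open Classical in
lemma brandtMul_id_right {S : Type*} [MonoidWithZero S] {lam : Type*}
    (h10 : (1 : S) ≠ 0) (β γ δ : lam) (b : {s : S // s ≠ 0}) :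
    brandtMul (some (γ, b, δ)) (some (β, ⟨1, h10⟩, β)) =
      if δ = β then some (γ, b, β) else none := by
  rw [brandtMul_some_some]
  by_cases h : δ = β
  · rw [dif_pos ⟨h, by simpa using b.2⟩, if_pos h]
    simp [Subtype.ext_iff]
  · rw [dif_neg (by tauto), if_neg h]

/-- In a Hausdorff semitopological Brandt extension, every nonzero point has an open
neighbourhood inside its sheet `S*_{α,β}`; hence `S*_{α,β}` is open and
`S_{α,β} = S*_{α,β} ∪ {0}` is closed. -/
theorem brandt_sheet_open_closed {S lam : Type*} [MonoidWithZero S]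
    [tB : TopologicalSpace (Brandt S lam)] [T2Space (Brandt S lam)]
    (hsep : SepCont (brandtMul (S := S) (lam := lam))) :
    (∀ (α β : lam) (s : {s : S // s ≠ 0}),
      ∃ U : Set (Brandt S lam), IsOpen U ∧ some (α, s, β) ∈ U ∧ U ⊆ sheet α β) ∧
    (∀ α β : lam, IsOpen (sheet (S := S) α β) ∧ IsClosed (sheet0 (S := S) α β)) := by
  have key : ∀ (α β : lam) (s : {s : S // s ≠ 0}),
      ∃ U : Set (Brandt S lam), IsOpen U ∧ some (α, s, β) ∈ U ∧ U ⊆ sheet α β := by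
    intro α β s
    have h10 : (1 : S) ≠ 0 := fun h => s.2 (by rw [← mul_one s.1, h, mul_zero])
    have hcont : Continuous (fun y : Brandt S lam =>
        brandtMul (brandtMul (some (α, ⟨1, h10⟩, α)) y) (some (β, ⟨1, h10⟩, β))) :=
      ((hsep (some (β, ⟨1, h10⟩, β))).2).comp ((hsep (some (α, ⟨1, h10⟩, α))).1)
    refine ⟨(fun y : Brandt S lam =>
        brandtMul (brandtMul (some (α, ⟨1, h10⟩, α)) y) (some (β, ⟨1, h10⟩, β))) ⁻¹'
        {none}ᶜ,
      hcont.isOpen_preimage _ isClosed_singleton.isOpen_compl, ?_, ?_⟩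
    · show brandtMul (brandtMul (some (α, ⟨1, h10⟩, α)) (some (α, s, β)))
        (some (β, ⟨1, h10⟩, β)) ∈ ({none}ᶜ : Set (Brandt S lam))
      rw [brandtMul_id_left, if_pos rfl, brandtMul_id_right, if_pos rfl]
      simp
    · intro y hy
      have hy' : brandtMul (brandtMul (some (α, ⟨1, h10⟩, α)) y)
          (some (β, ⟨1, h10⟩, β)) ≠ none := hy
      rcases y with _ | ⟨γ, b, δ⟩
      · exact absurd (by rw [brandtMul_none_right, brandtMul_none_left]) hy'
      · by_cases hγ : α = γ
        · by_cases hδ : δ = β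
          · subst hγ; subst hδ; exact ⟨b, rfl⟩
          · exact absurd (by rw [brandtMul_id_left, if_pos hγ,
              brandtMul_id_right, if_neg hδ]) hy'
        · exact absurd (by rw [brandtMul_id_left, if_neg hγ,
            brandtMul_none_left]) hy'
  refine ⟨key, fun α β => ?_⟩
  have hopen : ∀ γ δ : lam, IsOpen (sheet (S := S) γ δ) := by
    intro γ δ
    rw [isOpen_iff_forall_mem_open]
    rintro x ⟨s, rfl⟩
    obtain ⟨U, hU, hx, hsub⟩ := key γ δ s
    exact ⟨U, hsub, hU, hx⟩
  refine ⟨hopen α β, ?_⟩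
  rw [← isOpen_compl_iff, isOpen_iff_forall_mem_open]
  intro y hy
  rcases y with _ | ⟨γ, b, δ⟩
  · exact absurd (Or.inr rfl) hy
  · have hnd : ¬(γ = α ∧ δ = β) := by
      rintro ⟨rfl, rfl⟩
      exact hy (Or.inl ⟨b, rfl⟩)
    obtain ⟨U, hU, hx, hsub⟩ := key γ δ b
    refine ⟨U, ?_, hU, hx⟩
    intro z hz
    obtain ⟨t, rfl⟩ := hsub hz
    rintro (⟨t', heq⟩ | h0)
    · simp only [Option.some.injEq, Prod.mk.injEq] at heq
      exact hnd ⟨heq.1, heq.2.2⟩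
    · simp at h0
end

section
/- With the topology τ_B^S on the Brandt λ⁰-extension B⁰_λ(S) of a Hausdorff semitopological monoid S with zero (nonzero part a disjoint sum of copies of S\{0_S}; neighbourhoods of zero given by U_A(0) = ⋃_{(α,β)∉A} S_{α,β} ∪ ⋃_{(γ,δ)∈A} (U(0_S))_{γ,δ} for finite A), the space (B⁰_λ(S), τ_B^S) is normal if and only if S is normal. -/
open Topology Set Filter

/-! ### Auxiliary development -/

attribute [local instance] brandtTop

section BrandtAux

variable {S : Type*} [Zero S] [TopologicalSpace S] {lam : Type*}

/-- The generating family of `brandtTop`. -/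
def brandtGen (S : Type*) [Zero S] [TopologicalSpace S] (lam : Type*) :
    Set (Set (Brandt S lam)) :=
  {W | ∃ (α β : lam) (U : Set S), IsOpen U ∧ W = sheetTrace α β U} ∪
  {W | ∃ A : Set (lam × lam), A.Finite ∧
      ∃ U : Set S, IsOpen U ∧ (0 : S) ∈ U ∧ W = UA0 A U}

lemma sheetTrace_mono {α β : lam} {U V : Set S} (h : U ⊆ V) :
    sheetTrace (lam := lam) α β U ⊆ sheetTrace α β V := by
  rintro x ⟨s, hs, rfl⟩
  exact ⟨s, h hs, rfl⟩

lemma sheetTrace_subset_UA0 {α β : lam} {A : Set (lam × lam)} {U V : Set S}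
    (h : (α, β) ∉ A ∨ U ⊆ V) : sheetTrace (lam := lam) α β U ⊆ UA0 A V := by
  rintro x ⟨s, hs, rfl⟩
  exact Or.inr ⟨α, β, s, rfl, h.imp id fun h' => h' hs⟩

lemma UA0_mono {A A' : Set (lam × lam)} {U V : Set S} (hA : A ⊆ A') (hUV : V ⊆ U) :
    UA0 (lam := lam) A' V ⊆ UA0 A U := by
  rintro y (rfl | ⟨γ, δ, s, rfl, h⟩)
  · exact Or.inl rfl
  · exact Or.inr ⟨γ, δ, s, rfl, h.imp (fun h1 h2 => h1 (hA h2)) fun h2 => hUV h2⟩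

lemma UA0_some_elim {A : Set (lam × lam)} {U : Set S} {α β : lam} {s : {s : S // s ≠ 0}}
    (h : (some (α, s, β) : Brandt S lam) ∈ UA0 A U) : (α, β) ∉ A ∨ s.1 ∈ U := by
  rcases h with h | ⟨γ, δ, t, hx, h⟩
  · cases h
  · rw [Option.some.injEq, Prod.mk.injEq, Prod.mk.injEq] at hx
    obtain ⟨rfl, rfl, rfl⟩ := hx
    exact h

theorem brandt_basis :
    TopologicalSpace.IsTopologicalBasis (brandtGen S lam) := by
  refine ⟨?_, ?_, rfl⟩
  · rintro t₁ (⟨α, β, U, hU, rfl⟩ | ⟨A, hA, U, hU, h0U, rfl⟩) t₂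
      (⟨γ, δ, V, hV, rfl⟩ | ⟨B, hB, V, hV, h0V, rfl⟩) x ⟨hx₁, hx₂⟩
    · -- trace ∩ trace
      obtain ⟨s, hsU, rfl⟩ := hx₁
      obtain ⟨t, htV, hx⟩ := hx₂
      rw [Option.some.injEq, Prod.mk.injEq, Prod.mk.injEq] at hx
      obtain ⟨rfl, rfl, rfl⟩ := hx
      exact ⟨sheetTrace α β (U ∩ V), Or.inl ⟨α, β, U ∩ V, hU.inter hV, rfl⟩,
        ⟨s, ⟨hsU, htV⟩, rfl⟩,
        subset_inter (sheetTrace_mono inter_subset_left)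
          (sheetTrace_mono inter_subset_right)⟩
    · -- trace ∩ UA0
      obtain ⟨s, hsU, rfl⟩ := hx₁
      by_cases hAB : (α, β) ∈ B
      · have hsV : s.1 ∈ V := (UA0_some_elim hx₂).resolve_left fun hn => hn hAB
        exact ⟨sheetTrace α β (U ∩ V), Or.inl ⟨α, β, U ∩ V, hU.inter hV, rfl⟩,
          ⟨s, ⟨hsU, hsV⟩, rfl⟩,
          subset_inter (sheetTrace_mono inter_subset_left)
            (sheetTrace_subset_UA0 (Or.inr inter_subset_right))⟩
      · exact ⟨sheetTrace α β U, Or.inl ⟨α, β, U, hU, rfl⟩, ⟨s, hsU, rfl⟩,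
          subset_inter subset_rfl (sheetTrace_subset_UA0 (Or.inl hAB))⟩
    · -- UA0 ∩ trace
      obtain ⟨s, hsV, rfl⟩ := hx₂
      by_cases hAB : (γ, δ) ∈ A
      · have hsU : s.1 ∈ U := (UA0_some_elim hx₁).resolve_left fun hn => hn hAB
        exact ⟨sheetTrace γ δ (U ∩ V), Or.inl ⟨γ, δ, U ∩ V, hU.inter hV, rfl⟩,
          ⟨s, ⟨hsU, hsV⟩, rfl⟩,
          subset_inter (sheetTrace_subset_UA0 (Or.inr inter_subset_left))
            (sheetTrace_mono inter_subset_right)⟩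
      · exact ⟨sheetTrace γ δ V, Or.inl ⟨γ, δ, V, hV, rfl⟩, ⟨s, hsV, rfl⟩,
          subset_inter (sheetTrace_subset_UA0 (Or.inl hAB)) subset_rfl⟩
    · -- UA0 ∩ UA0
      obtain _ | ⟨γ, s, δ⟩ := x
      · exact ⟨UA0 (A ∪ B) (U ∩ V),
          Or.inr ⟨A ∪ B, hA.union hB, U ∩ V, hU.inter hV, ⟨h0U, h0V⟩, rfl⟩,
          Or.inl rfl,
          subset_inter (UA0_mono subset_union_left inter_subset_left)
            (UA0_mono subset_union_right inter_subset_right)⟩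
      · have h1 := UA0_some_elim hx₁
        have h2 := UA0_some_elim hx₂
        by_cases hA' : (γ, δ) ∈ A <;> by_cases hB' : (γ, δ) ∈ B
        · have hsU : s.1 ∈ U := h1.resolve_left fun hn => hn hA'
          have hsV : s.1 ∈ V := h2.resolve_left fun hn => hn hB'
          exact ⟨sheetTrace γ δ (U ∩ V), Or.inl ⟨γ, δ, U ∩ V, hU.inter hV, rfl⟩,
            ⟨s, ⟨hsU, hsV⟩, rfl⟩,
            subset_inter (sheetTrace_subset_UA0 (Or.inr inter_subset_left))
              (sheetTrace_subset_UA0 (Or.inr inter_subset_right))⟩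
        · have hsU : s.1 ∈ U := h1.resolve_left fun hn => hn hA'
          exact ⟨sheetTrace γ δ U, Or.inl ⟨γ, δ, U, hU, rfl⟩, ⟨s, hsU, rfl⟩,
            subset_inter (sheetTrace_subset_UA0 (Or.inr subset_rfl))
              (sheetTrace_subset_UA0 (Or.inl hB'))⟩
        · have hsV : s.1 ∈ V := h2.resolve_left fun hn => hn hB'
          exact ⟨sheetTrace γ δ V, Or.inl ⟨γ, δ, V, hV, rfl⟩, ⟨s, hsV, rfl⟩,
            subset_inter (sheetTrace_subset_UA0 (Or.inl hA'))
              (sheetTrace_subset_UA0 (Or.inr subset_rfl))⟩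
        · exact ⟨sheetTrace γ δ univ, Or.inl ⟨γ, δ, univ, isOpen_univ, rfl⟩,
            ⟨s, trivial, rfl⟩,
            subset_inter (sheetTrace_subset_UA0 (Or.inl hA'))
              (sheetTrace_subset_UA0 (Or.inl hB'))⟩
  · rw [sUnion_eq_univ_iff]
    intro x
    obtain _ | ⟨α, s, β⟩ := x
    · exact ⟨UA0 ∅ univ, Or.inr ⟨∅, finite_empty, univ, isOpen_univ, mem_univ 0, rfl⟩,
        Or.inl rfl⟩
    · exact ⟨sheetTrace α β univ, Or.inl ⟨α, β, univ, isOpen_univ, rfl⟩,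
        ⟨s, trivial, rfl⟩⟩

lemma isOpen_sheetTrace {α β : lam} {U : Set S} (hU : IsOpen U) :
    IsOpen (sheetTrace (lam := lam) α β U) :=
  brandt_basis.isOpen (Or.inl ⟨α, β, U, hU, rfl⟩)

lemma isOpen_UA0 {A : Set (lam × lam)} {U : Set S} (hA : A.Finite) (hU : IsOpen U)
    (h0 : (0 : S) ∈ U) : IsOpen (UA0 (lam := lam) A U) :=
  brandt_basis.isOpen (Or.inr ⟨A, hA, U, hU, h0, rfl⟩)

open Classical in
/-- Inclusion of `S` as the sheet `S_{α,β}`. -/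
noncomputable def bIncl (α β : lam) (s : S) : Brandt S lam :=
  if h : s = 0 then none else some (α, ⟨s, h⟩, β)

lemma bIncl_zero (α β : lam) : bIncl (S := S) (lam := lam) α β 0 = none := dif_pos rfl

lemma bIncl_eq_some_iff {α β γ δ : lam} {s : S} {t : {x : S // x ≠ 0}} :
    bIncl (lam := lam) α β s = some (γ, t, δ) ↔ s = t.1 ∧ γ = α ∧ δ = β := by
  unfold bIncl
  split_ifs with hs
  · constructor
    · intro h; cases h
    · rintro ⟨h, -, -⟩; exact t.2 (h.symm.trans hs)
  · rw [Option.some.injEq, Prod.mk.injEq, Prod.mk.injEq]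
    constructor
    · rintro ⟨rfl, h, rfl⟩
      exact ⟨congrArg Subtype.val h, rfl, rfl⟩
    · rintro ⟨rfl, rfl, rfl⟩
      exact ⟨rfl, Subtype.ext rfl, rfl⟩

lemma bIncl_of_ne (α β : lam) {s : S} (hs : s ≠ 0) :
    bIncl (lam := lam) α β s = some (α, ⟨s, hs⟩, β) := dif_neg hs

lemma bIncl_val (α β : lam) (t : {x : S // x ≠ 0}) :
    bIncl (lam := lam) α β t.1 = some (α, t, β) :=
  bIncl_eq_some_iff.mpr ⟨rfl, rfl, rfl⟩

lemma bIncl_eq_none_iff {α β : lam} {s : S} :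
    bIncl (lam := lam) α β s = none ↔ s = 0 := by
  unfold bIncl
  split_ifs with hs
  · simp [hs]
  · simp [hs]

lemma preimage_sheetTrace_same [T1Space S] (α β : lam) (U : Set S) :
    bIncl (lam := lam) α β ⁻¹' sheetTrace α β U = U \ {0} := by
  ext s
  simp only [mem_preimage, mem_diff, mem_singleton_iff]
  constructor
  · rintro ⟨t, htU, ht⟩
    rw [bIncl_eq_some_iff] at ht
    obtain ⟨rfl, -, -⟩ := ht
    exact ⟨htU, t.2⟩
  · rintro ⟨hsU, hs0⟩
    exact ⟨⟨s, hs0⟩, hsU, bIncl_val α β ⟨s, hs0⟩⟩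

lemma preimage_sheetTrace_ne {α β γ δ : lam} (h : ¬(γ = α ∧ δ = β)) (U : Set S) :
    bIncl (lam := lam) α β ⁻¹' sheetTrace γ δ U = ∅ := by
  rw [eq_empty_iff_forall_notMem]
  rintro s ⟨t, -, ht⟩
  rw [bIncl_eq_some_iff] at ht
  exact h ⟨ht.2.1, ht.2.2⟩

lemma preimage_UA0_mem {α β : lam} {A : Set (lam × lam)} {U : Set S} (h0 : (0 : S) ∈ U)
    (hA : (α, β) ∈ A) : bIncl (lam := lam) α β ⁻¹' UA0 A U = U := by
  ext s
  simp only [mem_preimage]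
  constructor
  · rintro (h | ⟨γ, δ, t, ht, hc⟩)
    · rw [bIncl_eq_none_iff] at h
      rw [h]; exact h0
    · rw [bIncl_eq_some_iff] at ht
      obtain ⟨rfl, rfl, rfl⟩ := ht
      exact hc.resolve_left fun hn => hn hA
  · intro hsU
    by_cases hs : s = 0
    · exact Or.inl (by rw [hs, bIncl_zero])
    · exact Or.inr ⟨α, β, ⟨s, hs⟩, bIncl_val α β ⟨s, hs⟩, Or.inr hsU⟩

lemma preimage_UA0_notMem {α β : lam} {A : Set (lam × lam)} {U : Set S}
    (hA : (α, β) ∉ A) : bIncl (lam := lam) α β ⁻¹' UA0 A U = univ := by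
  rw [eq_univ_iff_forall]
  intro s
  by_cases hs : s = 0
  · exact Or.inl (by rw [hs, bIncl_zero])
  · exact Or.inr ⟨α, β, ⟨s, hs⟩, bIncl_val α β ⟨s, hs⟩, Or.inl hA⟩

lemma continuous_bIncl [T1Space S] (α β : lam) :
    Continuous (bIncl (S := S) (lam := lam) α β) := by
  apply continuous_generateFrom_iff.mpr
  rintro W (⟨γ, δ, U, hU, rfl⟩ | ⟨A, hA, U, hU, h0U, rfl⟩)
  · by_cases h : γ = α ∧ δ = β
    · obtain ⟨rfl, rfl⟩ := h
      rw [preimage_sheetTrace_same]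
      exact hU.sdiff isClosed_singleton
    · rw [preimage_sheetTrace_ne h]
      exact isOpen_empty
  · by_cases hA' : (α, β) ∈ A
    · rw [preimage_UA0_mem h0U hA']
      exact hU
    · rw [preimage_UA0_notMem hA']
      exact isOpen_univ

lemma isInducing_bIncl [T1Space S] (α β : lam) :
    IsInducing (bIncl (S := S) (lam := lam) α β) := by
  refine ⟨TopologicalSpace.ext_iff.mpr fun U => ⟨fun hU => ?_, fun hU => ?_⟩⟩
  · rw [isOpen_induced_iff]
    by_cases h0 : (0 : S) ∈ U
    · exact ⟨UA0 {(α, β)} U, isOpen_UA0 (finite_singleton _) hU h0,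
        preimage_UA0_mem h0 rfl⟩
    · exact ⟨sheetTrace α β U, isOpen_sheetTrace hU,
        (preimage_sheetTrace_same α β U).trans (diff_singleton_eq_self h0)⟩
  · rw [isOpen_induced_iff] at hU
    obtain ⟨V, hV, rfl⟩ := hU
    exact hV.preimage (continuous_bIncl α β)

lemma bIncl_injective (α β : lam) :
    Function.Injective (bIncl (S := S) (lam := lam) α β) := by
  intro s t h
  by_cases hs : s = 0 <;> by_cases ht : t = 0
  · rw [hs, ht]
  · rw [hs, bIncl_zero] at h
    exact absurd (bIncl_eq_none_iff.mp h.symm) ht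
  · rw [ht, bIncl_zero] at h
    exact absurd (bIncl_eq_none_iff.mp h) hs
  · rw [bIncl_of_ne α β ht] at h
    exact (bIncl_eq_some_iff.mp h).1

lemma isClosed_range_bIncl (α β : lam) :
    IsClosed (range (bIncl (S := S) (lam := lam) α β)) := by
  have hrange : range (bIncl (S := S) (lam := lam) α β) = sheet0 α β := by
    ext x
    constructor
    · rintro ⟨s, rfl⟩
      by_cases hs : s = 0
      · rw [hs, bIncl_zero]; exact Or.inr rfl
      · rw [bIncl_of_ne α β hs]; exact Or.inl ⟨⟨s, hs⟩, rfl⟩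
    · rintro (⟨s, rfl⟩ | h)
      · exact ⟨s.1, bIncl_val α β s⟩
      · exact ⟨0, by rw [bIncl_zero, h]⟩
  rw [hrange, ← isOpen_compl_iff]
  have hcompl : (sheet0 (S := S) (lam := lam) α β)ᶜ =
      ⋃ p ∈ {q : lam × lam | q ≠ (α, β)}, sheetTrace p.1 p.2 univ := by
    ext x
    obtain _ | ⟨γ, s, δ⟩ := x
    · simp only [mem_compl_iff, sheet0, sheet, mem_union, mem_setOf_eq,
        mem_singleton_iff, mem_iUnion, sheetTrace]
      constructor
      · intro h; exact absurd (Or.inr trivial) h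
      · rintro ⟨p, -, t, -, h⟩; cases h
    · constructor
      · intro hx
        have hne : (γ, δ) ≠ (α, β) := by
          rintro h
          rw [Prod.mk.injEq] at h
          obtain ⟨rfl, rfl⟩ := h
          exact hx (Or.inl ⟨s, rfl⟩)
        exact mem_biUnion hne ⟨s, trivial, rfl⟩
      · intro h hmem
        obtain ⟨p, hp, t, -, hx⟩ := mem_iUnion₂.mp h
        rw [Option.some.injEq, Prod.mk.injEq, Prod.mk.injEq] at hx
        obtain ⟨rfl, rfl, rfl⟩ := hx
        rcases hmem with ⟨t', hx'⟩ | hx'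
        · rw [Option.some.injEq, Prod.mk.injEq, Prod.mk.injEq] at hx'
          exact hp (Prod.ext hx'.1 hx'.2.2)
        · cases hx'
  rw [hcompl]
  exact isOpen_biUnion fun p _ => isOpen_sheetTrace isOpen_univ

lemma isClosedEmbedding_bIncl [T1Space S] (α β : lam) :
    IsClosedEmbedding (bIncl (S := S) (lam := lam) α β) :=
  ⟨⟨isInducing_bIncl α β, bIncl_injective α β⟩, isClosed_range_bIncl α β⟩

lemma closed_subset_sheets {H : Set (Brandt S lam)} (hH : IsClosed H) (h0 : none ∉ H) :
    ∃ A : Set (lam × lam), A.Finite ∧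
      ∀ x ∈ H, ∃ p ∈ A, ∃ s : {s : S // s ≠ 0}, x = some (p.1, s, p.2) := by
  obtain ⟨t, ht, hnt, htH⟩ :=
    brandt_basis.exists_subset_of_mem_open (show (none : Brandt S lam) ∈ Hᶜ from h0)
      hH.isOpen_compl
  rcases ht with ⟨α, β, U, hU, rfl⟩ | ⟨A, hA, U, hU, h0U, rfl⟩
  · obtain ⟨s, -, h⟩ := hnt; cases h
  · refine ⟨A, hA, fun x hx => ?_⟩
    have hxU : x ∉ UA0 A U := fun hmem => htH hmem hx
    match x with
    | none => exact absurd (Or.inl rfl) hxU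
    | some (γ, s, δ) =>
      refine ⟨(γ, δ), ?_, s, rfl⟩
      by_contra hA'
      exact hxU (Or.inr ⟨γ, δ, s, rfl, Or.inl hA'⟩)

lemma separated_of_none_notMem [T1Space S] {H K : Set (Brandt S lam)}
    (hS : NormalSpace S) (hH : IsClosed H) (hK : IsClosed K) (hd : Disjoint H K)
    (h0 : none ∉ H) : SeparatedNhds H K := by
  have hsep : ∀ p : lam × lam,
      SeparatedNhds (bIncl p.1 p.2 ⁻¹' H) (bIncl p.1 p.2 ⁻¹' K) := fun p =>
    hS.normal _ _ (hH.preimage (continuous_bIncl p.1 p.2))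
      (hK.preimage (continuous_bIncl p.1 p.2)) (hd.preimage _)
  choose u v hu hv hHu hKv huv using hsep
  obtain ⟨A, hAfin, hAcov⟩ := closed_subset_sheets hH h0
  have hmemH : ∀ (p : lam × lam) (s : {s : S // s ≠ 0}),
      some (p.1, s, p.2) ∈ H → s.1 ∈ u p := fun p s hs =>
    hHu p (show bIncl p.1 p.2 s.1 ∈ H by rwa [bIncl_val])
  have hmemK : ∀ (p : lam × lam) (s : {s : S // s ≠ 0}),
      some (p.1, s, p.2) ∈ K → s.1 ∈ v p := fun p s hs =>
    hKv p (show bIncl p.1 p.2 s.1 ∈ K by rwa [bIncl_val])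
  by_cases hK0 : (none : Brandt S lam) ∈ K
  · -- zero lies in `K`
    have h0v : ∀ p : lam × lam, (0 : S) ∈ v p := fun p =>
      hKv p (show bIncl p.1 p.2 0 ∈ K by rwa [bIncl_zero])
    refine ⟨⋃ p ∈ A, sheetTrace p.1 p.2 (u p),
      UA0 A (⋂ p ∈ A, v p) ∪ ⋃ p ∈ A, sheetTrace p.1 p.2 (v p), ?_, ?_, ?_, ?_, ?_⟩
    · exact isOpen_biUnion fun p _ => isOpen_sheetTrace (hu p)
    · exact (isOpen_UA0 hAfin (hAfin.isOpen_biInter fun p _ => hv p)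
        (mem_iInter₂.mpr fun p _ => h0v p)).union
        (isOpen_biUnion fun p _ => isOpen_sheetTrace (hv p))
    · intro x hx
      obtain ⟨p, hpA, s, rfl⟩ := hAcov x hx
      exact mem_biUnion hpA ⟨s, hmemH p s hx, rfl⟩
    · intro x hx
      obtain _ | ⟨γ, s, δ⟩ := x
      · exact mem_union_left _ (Or.inl rfl)
      · by_cases hp : (γ, δ) ∈ A
        · exact mem_union_right _ (mem_biUnion hp ⟨s, hmemK (γ, δ) s hx, rfl⟩)
        · exact mem_union_left _ (Or.inr ⟨γ, δ, s, rfl, Or.inl hp⟩)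
    · rw [Set.disjoint_left]
      rintro x hxU hxV
      obtain ⟨p, hpA, hxp⟩ := mem_iUnion₂.mp hxU
      obtain ⟨s, hsu, rfl⟩ := hxp
      rcases hxV with hV1 | hV2
      · rcases hV1 with h | ⟨γ, δ, t, hx, hc⟩
        · cases h
        · rw [Option.some.injEq, Prod.mk.injEq, Prod.mk.injEq] at hx
          obtain ⟨rfl, rfl, rfl⟩ := hx
          rcases hc with hc | hc
          · exact hc (by rwa [Prod.mk.eta])
          · exact Set.disjoint_left.mp (huv p) hsu (mem_iInter₂.mp hc p hpA)
      · obtain ⟨q, hqA, t, htv, hx⟩ := mem_iUnion₂.mp hV2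
        rw [Option.some.injEq, Prod.mk.injEq, Prod.mk.injEq] at hx
        obtain ⟨hq1, rfl, hq2⟩ := hx
        have hpq : p = q := Prod.ext hq1 hq2
        subst hpq
        exact Set.disjoint_left.mp (huv p) hsu htv
  · -- zero lies in neither
    obtain ⟨B, hBfin, hBcov⟩ := closed_subset_sheets hK hK0
    refine ⟨⋃ p ∈ A ∪ B, sheetTrace p.1 p.2 (u p),
      ⋃ p ∈ A ∪ B, sheetTrace p.1 p.2 (v p),
      isOpen_biUnion fun p _ => isOpen_sheetTrace (hu p),
      isOpen_biUnion fun p _ => isOpen_sheetTrace (hv p), ?_, ?_, ?_⟩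
    · intro x hx
      obtain ⟨p, hpA, s, rfl⟩ := hAcov x hx
      exact mem_biUnion (mem_union_left _ hpA) ⟨s, hmemH p s hx, rfl⟩
    · intro x hx
      obtain ⟨p, hpB, s, rfl⟩ := hBcov x hx
      exact mem_biUnion (mem_union_right _ hpB) ⟨s, hmemK p s hx, rfl⟩
    · rw [Set.disjoint_left]
      rintro x hxU hxV
      obtain ⟨p, -, s, hsu, rfl⟩ := mem_iUnion₂.mp hxU
      obtain ⟨q, -, t, htv, hx⟩ := mem_iUnion₂.mp hxV
      rw [Option.some.injEq, Prod.mk.injEq, Prod.mk.injEq] at hx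
      obtain ⟨hq1, rfl, hq2⟩ := hx
      have hpq : p = q := Prod.ext hq1 hq2
      subst hpq
      exact Set.disjoint_left.mp (huv p) hsu htv

end BrandtAux

/-- The canonical Brandt extension topology `τ_B^S` is normal iff `S` is normal. -/
theorem brandt_normal_iff {S lam : Type*} [MonoidWithZero S] [TopologicalSpace S]
    [T2Space S] [Nonempty lam] (hsep : SepCont (fun x y : S => x * y)) :
    @NormalSpace (Brandt S lam) (brandtTop S lam) ↔ NormalSpace S := by
  constructor
  · intro hB
    obtain ⟨α⟩ := ‹Nonempty lam›
    haveI : NormalSpace (Brandt S lam) := hB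
    exact (isClosedEmbedding_bIncl (S := S) (lam := lam) α α).normalSpace
  · intro hS
    refine ⟨fun H K hH hK hd => ?_⟩
    by_cases h0 : (none : Brandt S lam) ∈ H
    · have h0K : (none : Brandt S lam) ∉ K := fun h => Set.disjoint_left.mp hd h0 h
      exact (separated_of_none_notMem hS hK hH hd.symm h0K).symm
    · exact separated_of_none_notMem hS hH hK hd h0
end

section
/- Let S be a Hausdorff semitopological monoid with zero, λ ≥ 1 a cardinal, and τ_B^S the canonical topology on the Brandt λ⁰-extension B⁰_λ(S) (disjoint-sum topology on the nonzero part, cofinite-sheet neighbourhoods of zero). Then the density satisfies d(B⁰_λ(S), τ_B^S) = max{λ, d(S)} (for infinite values). In particular, (B⁰_λ(S), τ_B^S) is separable if and only if S is separable and λ ≤ ℵ₀. -/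
open Topology Set Filter

/-- The density of a topological space: the least cardinality of a dense subset. -/
noncomputable def dens (X : Type u) [TopologicalSpace X] : Cardinal.{u} :=
  ⨅ A : {A : Set X // Dense A}, Cardinal.mk A.1

section BrandtAux
set_option linter.unusedSectionVars false

universe u

variable {S lam : Type u} [MonoidWithZero S] [TopologicalSpace S]
  [T2Space S] [Nontrivial S] [Nonempty lam]

/-- The generating family of the canonical topology. -/
def brandtFam (S : Type u) [Zero S] [TopologicalSpace S] (lam : Type u) :
    Set (Set (Brandt S lam)) :=
  {W | ∃ (α β : lam) (U : Set S), IsOpen U ∧ W = sheetTrace α β U} ∪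
  {W | ∃ A : Set (lam × lam), A.Finite ∧
      ∃ U : Set S, IsOpen U ∧ (0 : S) ∈ U ∧ W = UA0 A U}

lemma some_mem_sheetTrace {α β γ δ : lam} {U : Set S} {s : {s : S // s ≠ 0}} :
    (some (γ, s, δ) : Brandt S lam) ∈ sheetTrace α β U ↔ γ = α ∧ δ = β ∧ s.1 ∈ U := by
  constructor
  · rintro ⟨t, ht, h⟩
    simp only [Option.some_inj, Prod.mk.injEq] at h
    obtain ⟨rfl, rfl, rfl⟩ := h
    exact ⟨rfl, rfl, ht⟩
  · rintro ⟨rfl, rfl, h⟩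
    exact ⟨s, h, rfl⟩

lemma some_mem_UA0 {A : Set (lam × lam)} {U : Set S} {α β : lam} {s : {s : S // s ≠ 0}} :
    (some (α, s, β) : Brandt S lam) ∈ UA0 A U ↔ ((α, β) ∉ A ∨ s.1 ∈ U) := by
  constructor
  · rintro (h | ⟨γ, δ, t, h, hc⟩)
    · exact absurd h (by simp)
    · simp only [Option.some_inj, Prod.mk.injEq] at h
      obtain ⟨rfl, rfl, rfl⟩ := h
      exact hc
  · intro h
    exact Or.inr ⟨α, β, s, rfl, h⟩

lemma none_mem_UA0 {A : Set (lam × lam)} {U : Set S} : (none : Brandt S lam) ∈ UA0 A U :=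
  Or.inl rfl

lemma sheetTrace_mem_brandtFam {α β : lam} {U : Set S} (hU : IsOpen U) :
    sheetTrace (S := S) α β U ∈ brandtFam S lam :=
  Or.inl ⟨α, β, U, hU, rfl⟩

lemma UA0_mem_brandtFam {A : Set (lam × lam)} {U : Set S} (hA : A.Finite)
    (hU : IsOpen U) (hU0 : (0 : S) ∈ U) : UA0 A U ∈ brandtFam S lam :=
  Or.inr ⟨A, hA, U, hU, hU0, rfl⟩

theorem brandtBasis :
    @TopologicalSpace.IsTopologicalBasis (Brandt S lam) (brandtTop S lam) (brandtFam S lam) := by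
  letI : TopologicalSpace (Brandt S lam) := brandtTop S lam
  refine ⟨?_, ?_, rfl⟩
  · rintro t₁ (⟨α, β, U, hU, rfl⟩ | ⟨A, hA, U, hU, hU0, rfl⟩) t₂
      (⟨α', β', U', hU', rfl⟩ | ⟨A', hA', U', hU', hU0', rfl⟩) x ⟨hx1, hx2⟩
    · -- trace / trace
      obtain ⟨s, hs, rfl⟩ := hx1
      obtain ⟨rfl, rfl, hs'⟩ := some_mem_sheetTrace.mp hx2
      refine ⟨sheetTrace α β (U ∩ U'), sheetTrace_mem_brandtFam (hU.inter hU'),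
        ⟨s, ⟨hs, hs'⟩, rfl⟩, ?_⟩
      rintro y ⟨t, ⟨h1, h2⟩, rfl⟩
      exact ⟨⟨t, h1, rfl⟩, ⟨t, h2, rfl⟩⟩
    · -- trace / UA0
      obtain ⟨s, hs, rfl⟩ := hx1
      have hc := some_mem_UA0.mp hx2
      by_cases hin : (α, β) ∈ A'
      · have hs' : s.1 ∈ U' := hc.resolve_left (not_not_intro hin)
        refine ⟨sheetTrace α β (U ∩ U'), sheetTrace_mem_brandtFam (hU.inter hU'),
          ⟨s, ⟨hs, hs'⟩, rfl⟩, ?_⟩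
        rintro y ⟨t, ⟨h1, h2⟩, rfl⟩
        exact ⟨⟨t, h1, rfl⟩, some_mem_UA0.mpr (Or.inr h2)⟩
      · refine ⟨sheetTrace α β U, sheetTrace_mem_brandtFam hU, ⟨s, hs, rfl⟩, ?_⟩
        rintro y ⟨t, h1, rfl⟩
        exact ⟨⟨t, h1, rfl⟩, some_mem_UA0.mpr (Or.inl hin)⟩
    · -- UA0 / trace
      obtain ⟨s, hs, rfl⟩ := hx2
      have hc := some_mem_UA0.mp hx1
      by_cases hin : (α', β') ∈ A
      · have hs' : s.1 ∈ U := hc.resolve_left (not_not_intro hin)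
        refine ⟨sheetTrace α' β' (U ∩ U'), sheetTrace_mem_brandtFam (hU.inter hU'),
          ⟨s, ⟨hs', hs⟩, rfl⟩, ?_⟩
        rintro y ⟨t, ⟨h1, h2⟩, rfl⟩
        exact ⟨some_mem_UA0.mpr (Or.inr h1), ⟨t, h2, rfl⟩⟩
      · refine ⟨sheetTrace α' β' U', sheetTrace_mem_brandtFam hU', ⟨s, hs, rfl⟩, ?_⟩
        rintro y ⟨t, h1, rfl⟩
        exact ⟨some_mem_UA0.mpr (Or.inl hin), ⟨t, h1, rfl⟩⟩
    · -- UA0 / UA0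
      rcases hx1 with rfl | ⟨α, β, s, rfl, c₁⟩
      · refine ⟨UA0 (A ∪ A') (U ∩ U'), UA0_mem_brandtFam (hA.union hA')
          (hU.inter hU') ⟨hU0, hU0'⟩, none_mem_UA0, ?_⟩
        rintro y (rfl | ⟨γ, δ, t, rfl, hc⟩)
        · exact ⟨none_mem_UA0, none_mem_UA0⟩
        · rcases hc with hc | ⟨h1, h2⟩
          · exact ⟨some_mem_UA0.mpr (Or.inl fun h => hc (Or.inl h)),
              some_mem_UA0.mpr (Or.inl fun h => hc (Or.inr h))⟩
          · exact ⟨some_mem_UA0.mpr (Or.inr h1), some_mem_UA0.mpr (Or.inr h2)⟩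
      · have c₂ := some_mem_UA0.mp hx2
        classical
        set V : Set S := (if (α, β) ∈ A then U else Set.univ) ∩
          (if (α, β) ∈ A' then U' else Set.univ) with hV
        have hVopen : IsOpen V := by
          apply IsOpen.inter <;> split <;> first | exact hU | exact hU' | exact isOpen_univ
        have hsV : s.1 ∈ V := by
          constructor
          · split
            · next h => exact c₁.resolve_left (not_not_intro h)
            · exact Set.mem_univ _
          · split
            · next h => exact c₂.resolve_left (not_not_intro h)
            · exact Set.mem_univ _
        refine ⟨sheetTrace α β V, sheetTrace_mem_brandtFam hVopen, ⟨s, hsV, rfl⟩, ?_⟩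
        rintro y ⟨t, ht, rfl⟩
        constructor
        · by_cases h : (α, β) ∈ A
          · exact some_mem_UA0.mpr (Or.inr (by have := ht.1; rwa [if_pos h] at this))
          · exact some_mem_UA0.mpr (Or.inl h)
        · by_cases h : (α, β) ∈ A'
          · exact some_mem_UA0.mpr (Or.inr (by have := ht.2; rwa [if_pos h] at this))
          · exact some_mem_UA0.mpr (Or.inl h)
  · refine Set.eq_univ_of_forall fun x => ?_
    refine ⟨UA0 ∅ Set.univ, UA0_mem_brandtFam Set.finite_empty isOpen_univ (Set.mem_univ _), ?_⟩
    rcases x with _ | ⟨γ, s, δ⟩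
    · exact none_mem_UA0
    · exact some_mem_UA0.mpr (Or.inl (Set.notMem_empty _))

/-- The canonical "dense set upstairs" built from a subset of `S`. -/
def brandtUp (lam : Type u) (D₀ : Set S) : Set (Brandt S lam) :=
  insert none (Set.range fun p : lam × {s : {s : S // s ≠ 0} // s.1 ∈ D₀} × lam =>
    (some (p.1, p.2.1.1, p.2.2) : Brandt S lam))

lemma dense_brandtUp {D₀ : Set S} (hD : Dense D₀) :
    @Dense (Brandt S lam) (brandtTop S lam) (brandtUp lam D₀) := by
  letI : TopologicalSpace (Brandt S lam) := brandtTop S lam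
  rw [(brandtBasis (S := S) (lam := lam)).dense_iff]
  rintro o (⟨α, β, U, hU, rfl⟩ | ⟨A, hA, U, hU, hU0, rfl⟩) ho
  · obtain ⟨x, s, hsU, rfl⟩ := ho
    have hUo : IsOpen (U ∩ {t : S | t ≠ 0}) := hU.inter isOpen_ne
    obtain ⟨d, ⟨hdU, hd0⟩, hdD⟩ := hD.inter_open_nonempty _ hUo ⟨s.1, hsU, s.2⟩
    exact ⟨some (α, ⟨d, hd0⟩, β), ⟨⟨d, hd0⟩, hdU, rfl⟩,
      Set.mem_insert_iff.mpr (Or.inr ⟨(α, ⟨⟨d, hd0⟩, hdD⟩, β), rfl⟩)⟩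
  · exact ⟨none, none_mem_UA0, Set.mem_insert _ _⟩

/-- Projection of the Brandt extension back to `S`. -/
def brandtProj : Brandt S lam → S := fun x =>
  match x with
  | none => 0
  | some (_, s, _) => s.1

lemma dense_brandtProj {D : Set (Brandt S lam)} (hD : @Dense (Brandt S lam) (brandtTop S lam) D) :
    Dense (insert (0 : S) (brandtProj '' D)) := by
  letI : TopologicalSpace (Brandt S lam) := brandtTop S lam
  rw [dense_iff_inter_open]
  rintro U hU ⟨u, hu⟩
  by_cases h : ∃ v ∈ U, v ≠ 0
  · obtain ⟨v, hvU, hv0⟩ := h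
    have α₀ : lam := Classical.arbitrary lam
    have hopen : @IsOpen (Brandt S lam) (brandtTop S lam)
        (sheetTrace α₀ α₀ (U ∩ {t : S | t ≠ 0})) :=
      (brandtBasis (S := S) (lam := lam)).isOpen
        (sheetTrace_mem_brandtFam (hU.inter isOpen_ne))
    have hne : (sheetTrace (S := S) α₀ α₀ (U ∩ {t : S | t ≠ 0})).Nonempty :=
      ⟨some (α₀, ⟨v, hv0⟩, α₀), ⟨v, hv0⟩, ⟨hvU, hv0⟩, rfl⟩
    obtain ⟨x, hx, hxD⟩ := hD.inter_open_nonempty _ hopen hne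
    obtain ⟨s, ⟨hsU, _⟩, rfl⟩ := hx
    exact ⟨s.1, hsU, Set.mem_insert_iff.mpr (Or.inr ⟨_, hxD, rfl⟩)⟩
  · push_neg at h
    exact ⟨u, hu, Set.mem_insert_iff.mpr (Or.inl (h u hu))⟩

lemma lam_le_of_brandtDense {D : Set (Brandt S lam)}
    (hD : @Dense (Brandt S lam) (brandtTop S lam) D) :
    Cardinal.mk lam ≤ Cardinal.mk D := by
  letI : TopologicalSpace (Brandt S lam) := brandtTop S lam
  obtain ⟨s0, hs0⟩ := exists_ne (0 : S)
  have key : ∀ α : lam, ((sheetTrace (S := S) α α Set.univ) ∩ D).Nonempty := fun α =>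
    hD.inter_open_nonempty _
      ((brandtBasis (S := S) (lam := lam)).isOpen (sheetTrace_mem_brandtFam isOpen_univ))
      ⟨some (α, ⟨s0, hs0⟩, α), ⟨s0, hs0⟩, Set.mem_univ _, rfl⟩
  choose f hf using key
  refine Cardinal.mk_le_of_injective (f := fun α => (⟨f α, (hf α).2⟩ : D)) ?_
  intro a b hab
  obtain ⟨s, _, hs⟩ := (hf a).1
  obtain ⟨t, _, ht⟩ := (hf b).1
  have hfab : f a = f b := congrArg Subtype.val hab
  rw [hs, ht] at hfab
  simp only [Option.some_inj, Prod.mk.injEq] at hfab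
  exact hfab.1

end BrandtAux

/-- Density of the Brandt extension: `d(B⁰_λ(S)) = max {λ, d(S)}` (for infinite
values); in particular `B⁰_λ(S)` is separable iff `S` is separable and `λ ≤ ℵ₀`. -/
theorem brandt_density {S lam : Type u} [MonoidWithZero S] [TopologicalSpace S]
    [T2Space S] [Nontrivial S] [Nonempty lam]
    (hsep : SepCont (fun x y : S => x * y)) :
    (Cardinal.aleph0 ≤ max (Cardinal.mk lam) (dens S) →
      @dens (Brandt S lam) (brandtTop S lam) = max (Cardinal.mk lam) (dens S)) ∧
    (@TopologicalSpace.SeparableSpace (Brandt S lam) (brandtTop S lam) ↔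
      TopologicalSpace.SeparableSpace S ∧ Cardinal.mk lam ≤ Cardinal.aleph0) := by
    classical
  letI : TopologicalSpace (Brandt S lam) := brandtTop S lam
  have attS : ∃ A : {A : Set S // Dense A}, Cardinal.mk A.1 = dens S := by
    haveI : Nonempty {A : Set S // Dense A} := ⟨⟨Set.univ, dense_univ⟩⟩
    obtain ⟨A, hA⟩ := Set.mem_range.mp
      (ciInf_mem fun A : {A : Set S // Dense A} => Cardinal.mk A.1)
    exact ⟨A, hA⟩
  have attB : ∃ A : {A : Set (Brandt S lam) // Dense A},
      Cardinal.mk A.1 = dens (Brandt S lam) := by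
    haveI : Nonempty {A : Set (Brandt S lam) // Dense A} := ⟨⟨Set.univ, dense_univ⟩⟩
    obtain ⟨A, hA⟩ := Set.mem_range.mp
      (ciInf_mem fun A : {A : Set (Brandt S lam) // Dense A} => Cardinal.mk A.1)
    exact ⟨A, hA⟩
  have densS_le : ∀ A : Set S, Dense A → dens S ≤ Cardinal.mk A := fun A hA =>
    ciInf_le' (fun A : {A : Set S // Dense A} => Cardinal.mk A.1) ⟨A, hA⟩
  have densB_le : ∀ A : Set (Brandt S lam), Dense A →
      dens (Brandt S lam) ≤ Cardinal.mk A := fun A hA =>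
    ciInf_le' (fun A : {A : Set (Brandt S lam) // Dense A} => Cardinal.mk A.1) ⟨A, hA⟩
  have upbound : ∀ D₀ : Set S, Cardinal.mk (brandtUp lam D₀) ≤
      Cardinal.mk lam * Cardinal.mk D₀ * Cardinal.mk lam + 1 := by
    intro D₀
    refine (Cardinal.mk_insert_le).trans (add_le_add_left ?_ 1)
    refine (Cardinal.mk_range_le).trans ?_
    have hsub : Cardinal.mk {s : {s : S // s ≠ 0} // s.1 ∈ D₀} ≤ Cardinal.mk D₀ := by
      refine Cardinal.mk_le_of_injective
        (f := fun s => (⟨s.1.1, s.2⟩ : D₀)) fun a b hab => ?_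
      simp only [Subtype.mk.injEq] at hab
      exact Subtype.ext (Subtype.ext hab)
    calc Cardinal.mk (lam × {s : {s : S // s ≠ 0} // s.1 ∈ D₀} × lam)
        = Cardinal.mk lam * (Cardinal.mk {s : {s : S // s ≠ 0} // s.1 ∈ D₀} *
            Cardinal.mk lam) := by
          simp [Cardinal.mk_prod]
      _ ≤ Cardinal.mk lam * (Cardinal.mk D₀ * Cardinal.mk lam) := by
          exact mul_le_mul' le_rfl (mul_le_mul' hsub le_rfl)
      _ = Cardinal.mk lam * Cardinal.mk D₀ * Cardinal.mk lam := by ring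
  constructor
  · intro hκ
    set κ := max (Cardinal.mk lam) (dens S) with hκdef
    apply le_antisymm
    · obtain ⟨A, hAeq⟩ := attS
      refine (densB_le _ (dense_brandtUp A.2)).trans ?_
      refine ((upbound A.1).trans ?_)
      have h1 : Cardinal.mk lam ≤ κ := le_max_left _ _
      have h2 : Cardinal.mk A.1 ≤ κ := hAeq ▸ le_max_right _ _
      have hmul : Cardinal.mk lam * Cardinal.mk A.1 * Cardinal.mk lam ≤ κ := by
        calc Cardinal.mk lam * Cardinal.mk A.1 * Cardinal.mk lam
            ≤ κ * κ * κ := mul_le_mul' (mul_le_mul' h1 h2) h1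
          _ = κ := by rw [Cardinal.mul_eq_self hκ, Cardinal.mul_eq_self hκ]
      calc Cardinal.mk lam * Cardinal.mk A.1 * Cardinal.mk lam + 1
          ≤ κ + 1 := add_le_add_left hmul 1
        _ = κ := Cardinal.add_one_eq hκ
    · obtain ⟨D, hDeq⟩ := attB
      have hlamle : Cardinal.mk lam ≤ dens (Brandt S lam) :=
        hDeq ▸ lam_le_of_brandtDense D.2
      have hSle : dens S ≤ dens (Brandt S lam) + 1 := by
        refine (densS_le _ (dense_brandtProj D.2)).trans ?_
        refine (Cardinal.mk_insert_le).trans (add_le_add_left ?_ 1)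
        exact hDeq ▸ Cardinal.mk_image_le
      have hinf : Cardinal.aleph0 ≤ dens (Brandt S lam) := by
        by_contra hlt
        rw [not_le] at hlt
        have : κ < Cardinal.aleph0 := by
          refine max_lt (hlamle.trans_lt hlt) ?_
          exact hSle.trans_lt (Cardinal.add_lt_aleph0 hlt Cardinal.one_lt_aleph0)
        exact absurd hκ (not_le.mpr this)
      refine max_le hlamle ?_
      calc dens S ≤ dens (Brandt S lam) + 1 := hSle
        _ = dens (Brandt S lam) := Cardinal.add_one_eq hinf
  · constructor
    · intro hsp
      obtain ⟨D, hDc, hDd⟩ := hsp.exists_countable_dense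
      haveI := hDc.to_subtype
      refine ⟨⟨⟨_, (hDc.image brandtProj).insert 0, dense_brandtProj hDd⟩⟩, ?_⟩
      exact (lam_le_of_brandtDense hDd).trans Cardinal.mk_le_aleph0
    · rintro ⟨hS, hlam⟩
      haveI : Countable lam := Cardinal.mk_le_aleph0_iff.mp hlam
      obtain ⟨D₀, hD₀c, hD₀d⟩ := hS.exists_countable_dense
      haveI := hD₀c.to_subtype
      haveI : Countable {s : {s : S // s ≠ 0} // s.1 ∈ D₀} := by
        refine Function.Injective.countable
          (f := fun s => (⟨s.1.1, s.2⟩ : D₀)) fun a b hab => ?_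
        simp only [Subtype.mk.injEq] at hab
        exact Subtype.ext (Subtype.ext hab)
      exact ⟨⟨brandtUp lam D₀, (Set.countable_range _).insert none, dense_brandtUp hD₀d⟩⟩
end
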